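/- In the generalized eigenvalue setting below, let ξ > 0, let f : ℝ^N → ℝ, and let u⋆ ∈ ℝ^N be a global minimizer of g(u) := f(u) + ξ‖u‖_A². Let L⋆ ≥ 0 satisfy |f(u) − f(u')| ≤ L⋆‖u − u'‖_M for all u, u' with ‖u‖_M ≤ ‖u⋆‖_M and ‖u'‖_M ≤ ‖u⋆‖_M. Set 𝔈 := inf_{u∈ℝ^N} g(u) = g(u⋆) and 𝔈_m := inf_{u∈W} g(u). If λ_{m+1} > 0, then 0 ≤ 𝔈_m − 𝔈 ≤ (L⋆)²/(ξ·λ_{m+1}). -/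

import Mathlib

open Matrix

/-- In the generalized eigenvalue setting, with `g u = f u + ξ‖u‖_A²`, `u⋆` a global
minimizer of `g`, `L⋆` a Lipschitz constant for `f` on the `‖·‖_M`-ball of radius
`‖u⋆‖_M`, `𝔈 = g u⋆` and `𝔈_m = inf_{u ∈ W} g u`, if `λ_{m+1} > 0` then
`0 ≤ 𝔈_m - 𝔈 ≤ (L⋆)²/(ξ λ_{m+1})`. -/
theorem truncated_basis_objective_bound
    (N : ℕ) (hN : 1 ≤ N)
    (M A : Matrix (Fin N) (Fin N) ℝ)
    (hMsymm : M.IsSymm) (hAsymm : A.IsSymm)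
    (hMpd : M.PosDef) (hApsd : A.PosSemidef)
    (φ : Fin N → (Fin N → ℝ)) (lam : Fin N → ℝ)
    (hortho : ∀ i j, φ i ⬝ᵥ M.mulVec (φ j) = if i = j then 1 else 0)
    (heig : ∀ i, A.mulVec (φ i) = lam i • M.mulVec (φ i))
    (hlam_nonneg : ∀ i, 0 ≤ lam i)
    (hlam_mono : Monotone lam)
    (m : ℕ) (hm : 1 ≤ m) (hmN : m < N)
    (W : Submodule ℝ (Fin N → ℝ))
    (hW : W = Submodule.span ℝ {w : Fin N → ℝ | ∃ i : Fin N, (i : ℕ) < m ∧ w = φ i})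
    (ξ : ℝ) (hξ : 0 < ξ)
    (f g : (Fin N → ℝ) → ℝ)
    (hg : ∀ u, g u = f u + ξ * (u ⬝ᵥ A.mulVec u))
    (ustar : Fin N → ℝ)
    (hmin : ∀ u, g ustar ≤ g u)
    (Lstar : ℝ) (hLstar : 0 ≤ Lstar)
    (hLip : ∀ u u' : Fin N → ℝ,
      Real.sqrt (u ⬝ᵥ M.mulVec u) ≤ Real.sqrt (ustar ⬝ᵥ M.mulVec ustar) →
      Real.sqrt (u' ⬝ᵥ M.mulVec u') ≤ Real.sqrt (ustar ⬝ᵥ M.mulVec ustar) →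
      |f u - f u'| ≤ Lstar * Real.sqrt ((u - u') ⬝ᵥ M.mulVec (u - u')))
    (hlam_pos : 0 < lam ⟨m, hmN⟩)
    (Em : ℝ) (hEm : Em = sInf (g '' (W : Set (Fin N → ℝ)))) :
    0 ≤ Em - g ustar ∧ Em - g ustar ≤ Lstar ^ 2 / (ξ * lam ⟨m, hmN⟩) := by
  set m0 : Fin N := ⟨m, hmN⟩ with hm0
  -- expansion of dot product against one basis vector
  have sum_dp : ∀ (y : Fin N → (Fin N → ℝ)) (w : Fin N → ℝ),
      (∑ i, y i) ⬝ᵥ w = ∑ i, y i ⬝ᵥ w := by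
    intro y w
    simp only [dotProduct, Finset.sum_apply, Finset.sum_mul]
    exact Finset.sum_comm
  have dp_sum : ∀ (w : Fin N → ℝ) (y : Fin N → (Fin N → ℝ)),
      w ⬝ᵥ (∑ i, y i) = ∑ i, w ⬝ᵥ y i := by
    intro w y
    simp only [dotProduct, Finset.sum_apply, Finset.mul_sum]
    exact Finset.sum_comm
  have hmv : ∀ (Bm : Matrix (Fin N) (Fin N) ℝ) (b : Fin N → ℝ),
      Bm.mulVec (∑ i, b i • φ i) = ∑ i, b i • Bm.mulVec (φ i) := by
    intro Bm b
    have h := map_sum (Matrix.mulVecLin Bm) (fun i => b i • φ i) Finset.univ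
    simp only [_root_.map_smul, Matrix.mulVecLin_apply] at h
    exact h
  have ipj : ∀ (a : Fin N → ℝ) (j : Fin N),
      (∑ i, a i • φ i) ⬝ᵥ M.mulVec (φ j) = a j := by
    intro a j
    rw [sum_dp]
    simp only [smul_dotProduct, smul_eq_mul, hortho]
    simp
  have keyM : ∀ (a b : Fin N → ℝ),
      (∑ i, a i • φ i) ⬝ᵥ M.mulVec (∑ i, b i • φ i) = ∑ i, a i * b i := by
    intro a b
    rw [hmv, dp_sum]
    refine Finset.sum_congr rfl fun j _ => ?_
    rw [dotProduct_smul, smul_eq_mul, ipj, mul_comm]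
  have keyA : ∀ (a b : Fin N → ℝ),
      (∑ i, a i • φ i) ⬝ᵥ A.mulVec (∑ i, b i • φ i) = ∑ i, lam i * (a i * b i) := by
    intro a b
    have hmvA : A.mulVec (∑ i, b i • φ i) = ∑ i, b i • (lam i • M.mulVec (φ i)) := by
      rw [hmv]
      exact Finset.sum_congr rfl fun i _ => by rw [heig]
    rw [hmvA, dp_sum]
    refine Finset.sum_congr rfl fun j _ => ?_
    rw [dotProduct_smul, dotProduct_smul, smul_eq_mul, smul_eq_mul, ipj]
    ring
  -- φ is a basis
  have hli : LinearIndependent ℝ φ := by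
    rw [Fintype.linearIndependent_iff]
    intro gc hgc j
    have h := ipj gc j
    rw [hgc] at h
    simpa using h.symm
  have hcard : Fintype.card (Fin N) = Module.finrank ℝ (Fin N → ℝ) := by simp
  haveI : Nonempty (Fin N) := ⟨⟨0, hN⟩⟩
  let B : Module.Basis (Fin N) ℝ (Fin N → ℝ) := basisOfLinearIndependentOfCardEqFinrank hli hcard
  have hB : ∀ i, B i = φ i := fun i =>
    congrFun (coe_basisOfLinearIndependentOfCardEqFinrank hli hcard) i
  set c : Fin N → ℝ := fun i => B.repr ustar i with hc
  have hustar : ustar = ∑ i, c i • φ i := by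
    conv_lhs => rw [← B.sum_repr ustar]
    exact Finset.sum_congr rfl fun i _ => by rw [hB]
  set cv : Fin N → ℝ := fun i => if (i : ℕ) < m then c i else 0 with hcv
  set cr : Fin N → ℝ := fun i => if (i : ℕ) < m then 0 else c i with hcr
  set v : Fin N → ℝ := ∑ i, cv i • φ i with hv
  have hvr : ustar - v = ∑ i, cr i • φ i := by
    rw [hustar, hv, ← Finset.sum_sub_distrib]
    refine Finset.sum_congr rfl fun i _ => ?_
    rw [← sub_smul]
    by_cases h : (i : ℕ) < m <;> simp [hcv, hcr, h]
  have hvW : v ∈ W := by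
    rw [hW, hv]
    refine Submodule.sum_mem _ fun i _ => ?_
    by_cases h : (i : ℕ) < m
    · exact Submodule.smul_mem _ _ (Submodule.subset_span ⟨i, h, rfl⟩)
    · simp only [hcv, if_neg h, zero_smul]
      exact Submodule.zero_mem _
  -- quadratic form values
  have hMust : ustar ⬝ᵥ M.mulVec ustar = ∑ i, c i * c i := by
    rw [hustar]; exact keyM c c
  have hMv : v ⬝ᵥ M.mulVec v = ∑ i, cv i * cv i := keyM cv cv
  have hMr : (ustar - v) ⬝ᵥ M.mulVec (ustar - v) = ∑ i, cr i * cr i := by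
    rw [hvr]; exact keyM cr cr
  have hAust : ustar ⬝ᵥ A.mulVec ustar = ∑ i, lam i * (c i * c i) := by
    rw [hustar]; exact keyA c c
  have hAv : v ⬝ᵥ A.mulVec v = ∑ i, lam i * (cv i * cv i) := keyA cv cv
  set S : ℝ := ∑ i, cr i * cr i with hSdef
  have hS0 : 0 ≤ S := Finset.sum_nonneg fun i _ => mul_self_nonneg _
  set t : ℝ := Real.sqrt S with ht
  have ht0 : 0 ≤ t := Real.sqrt_nonneg _
  have ht2 : t ^ 2 = S := Real.sq_sqrt hS0
  -- ‖v‖_M ≤ ‖u⋆‖_M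
  have hvle : Real.sqrt (v ⬝ᵥ M.mulVec v) ≤ Real.sqrt (ustar ⬝ᵥ M.mulVec ustar) := by
    apply Real.sqrt_le_sqrt
    rw [hMv, hMust]
    refine Finset.sum_le_sum fun i _ => ?_
    by_cases h : (i : ℕ) < m
    · simp [hcv, h]
    · simp only [hcv, if_neg h]
      simpa using mul_self_nonneg (c i)
  -- Lipschitz bound
  have hflip : f v - f ustar ≤ Lstar * t := by
    have h1 := hLip v ustar hvle le_rfl
    have h2 : (v - ustar) ⬝ᵥ M.mulVec (v - ustar) = (ustar - v) ⬝ᵥ M.mulVec (ustar - v) := by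
      have h3 : v - ustar = -(ustar - v) := by ring
      rw [h3]
      simp only [Matrix.mulVec_neg, neg_dotProduct, dotProduct_neg, neg_neg]
    rw [h2, hMr] at h1
    calc f v - f ustar ≤ |f v - f ustar| := le_abs_self _
    _ ≤ Lstar * t := h1
  -- A-form difference
  have hAdiff : ustar ⬝ᵥ A.mulVec ustar - v ⬝ᵥ A.mulVec v = ∑ i, lam i * (cr i * cr i) := by
    rw [hAust, hAv, ← Finset.sum_sub_distrib]
    refine Finset.sum_congr rfl fun i _ => ?_
    by_cases h : (i : ℕ) < m <;> simp [hcv, hcr, h] <;> ring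
  have hAge : lam m0 * S ≤ ∑ i, lam i * (cr i * cr i) := by
    rw [hSdef, Finset.mul_sum]
    refine Finset.sum_le_sum fun i _ => ?_
    by_cases h : (i : ℕ) < m
    · simp [hcr, h]
    · have hle : m0 ≤ i := by
        rw [Fin.le_def]
        exact Nat.le_of_not_lt h
      exact mul_le_mul_of_nonneg_right (hlam_mono hle) (mul_self_nonneg _)
  -- g v bound
  have hgv : g v ≤ g ustar + Lstar * t - ξ * (lam m0 * S) := by
    rw [hg v, hg ustar]
    have h3 : ξ * (lam m0 * S) ≤ ξ * (ustar ⬝ᵥ A.mulVec ustar - v ⬝ᵥ A.mulVec v) := by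
      rw [hAdiff]
      exact mul_le_mul_of_nonneg_left hAge hξ.le
    linarith
  -- Em bounds
  have hlb : ∀ y ∈ g '' (W : Set (Fin N → ℝ)), g ustar ≤ y := by
    rintro y ⟨u, -, rfl⟩
    exact hmin u
  have hbdd : BddBelow (g '' (W : Set (Fin N → ℝ))) := ⟨g ustar, hlb⟩
  have hne : (g '' (W : Set (Fin N → ℝ))).Nonempty :=
    ⟨g 0, 0, W.zero_mem, rfl⟩
  have h1 : g ustar ≤ Em := by
    rw [hEm]; exact le_csInf hne hlb
  have h2 : Em ≤ g v := by
    rw [hEm]; exact csInf_le hbdd ⟨v, hvW, rfl⟩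
  constructor
  · linarith
  · have hpos : 0 < ξ * lam m0 := mul_pos hξ hlam_pos
    have hquad : Lstar * t - ξ * (lam m0 * S) ≤ Lstar ^ 2 / (ξ * lam m0) := by
      rw [le_div_iff₀ hpos, ← ht2]
      nlinarith [sq_nonneg (Lstar - ξ * lam m0 * t), sq_nonneg Lstar,
        sq_nonneg (ξ * lam m0 * t)]
    linarith
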